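/- Let $p$ be a prime, let $g$ be an integer with $\gcd(g,p) = 1$, and let $n$ be the multiplicative order of $g$ modulo $p$. Assume $n \not\equiv 2 \pmod 4$. Let $a$ be an integer and set $h \equiv g^a \pmod p$. Then $Q(g, 1, p) \equiv g^{a^2} \cdot Q(g, h^2, p) \pmod p$, where $Q(g, h, p) = \sum_{k=1}^{p-1} g^{k^2} h^k \pmod p$. -/

import Mathlib

/-- The quadratic sum `Q(g,h,p) = ∑_{k=1}^{p-1} g^{k²} h^k (mod p)`. -/
def quadSum (p : ℕ) (g h : ℤ) : ZMod p :=
  ∑ k ∈ Finset.Icc 1 (p - 1), (g : ZMod p) ^ (k ^ 2) * (h : ZMod p) ^ k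

/-- Shifting a sum over a full multiple of the period doesn't change it. -/
lemma shift_sum_aux {M : Type*} [AddCancelCommMonoid M] (f : ℕ → M) (n m : ℕ)
    (hper : ∀ k, f (k + n) = f k) (hm : n ∣ m) (c : ℕ) :
    ∑ k ∈ Finset.range m, f (k + c) = ∑ k ∈ Finset.range m, f k := by
  have hmul : ∀ k, f (k + m) = f k := by
    obtain ⟨t, rfl⟩ := hm
    intro k
    induction t with
    | zero => simp
    | succ t ih =>
      have : k + n * (t + 1) = (k + n * t) + n := by ring
      rw [this, hper, ih]
  induction c with
  | zero => simp
  | succ c ih =>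
    have h1 : ∑ k ∈ Finset.range (m + 1), f (k + c)
        = (∑ k ∈ Finset.range m, f (k + (c + 1))) + f c := by
      rw [Finset.sum_range_succ' (fun k => f (k + c)) m]
      simp [Nat.add_assoc, Nat.add_comm 1 c]
    have h2 : ∑ k ∈ Finset.range (m + 1), f (k + c)
        = (∑ k ∈ Finset.range m, f (k + c)) + f c := by
      rw [Finset.sum_range_succ]
      have : m + c = c + m := by ring
      rw [this, hmul]
    have := h1.symm.trans h2
    have h3 : ∑ k ∈ Finset.range m, f (k + (c + 1)) = ∑ k ∈ Finset.range m, f (k + c) :=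
      add_right_cancel this
    rw [h3, ih]

/-- **Theorem 1.** If `n` is the multiplicative order of `g` mod `p`, `n ≢ 2 (mod 4)`,
and `h ≡ g^a (mod p)`, then `g^{a²} ≡ Q(g,1,p) · Q(g,h²,p)⁻¹ (mod p)`, i.e.
`Q(g,1,p) ≡ g^{a²} · Q(g,h²,p) (mod p)`. -/
theorem quadSum_diffie_hellman (p : ℕ) (hp : p.Prime) (g : ℤ) (hg : Int.gcd g p = 1)
    (n : ℕ) (hn : n = orderOf ((g : ZMod p))) (hn4 : n % 4 ≠ 2)
    (a : ℕ) (h : ℤ) (hh : (h : ZMod p) = (g : ZMod p) ^ a) :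
    quadSum p g 1 = (g : ZMod p) ^ (a ^ 2) * quadSum p g (h ^ 2) := by
  haveI : Fact p.Prime := ⟨hp⟩
  set G : ZMod p := (g : ZMod p) with hG
  have hG1 : G ^ n = 1 := by rw [hn]; exact pow_orderOf_eq_one G
  have hGne : G ≠ 0 := by
    intro h0
    have hdvd : (p : ℤ) ∣ g := by
      rwa [ZMod.intCast_zmod_eq_zero_iff_dvd] at h0
    have : (p : ℤ) ∣ (Int.gcd g p : ℤ) := Int.dvd_coe_gcd hdvd dvd_rfl
    rw [hg] at this
    have := Int.le_of_dvd one_pos this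
    have := hp.two_le
    omega
  have hdvd : n ∣ p - 1 := by
    rw [hn]
    exact orderOf_dvd_of_pow_eq_one (ZMod.pow_card_sub_one_eq_one hGne)
  set f : ℕ → ZMod p := fun k => G ^ (k ^ 2) with hf
  have hper : ∀ k, f (k + n) = f k := by
    intro k
    have he : (k + n) ^ 2 = k ^ 2 + n * (2 * k + n) := by ring
    simp only [hf, he, pow_add, pow_mul, hG1, one_pow, mul_one]
  have hterm : ∀ k, G ^ (a ^ 2) * (G ^ (k ^ 2) * ((G ^ a) ^ 2) ^ k) = f (k + a) := by
    intro k
    simp only [hf, ← pow_mul, ← pow_add]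
    congr 1
    ring
  have hcast : ((h ^ 2 : ℤ) : ZMod p) = (G ^ a) ^ 2 := by
    push_cast
    rw [hh]
  simp only [quadSum, Int.cast_one, one_pow, mul_one, hcast, ← hG, Finset.mul_sum, hterm]
  have hIcc : ∀ (F : ℕ → ZMod p), ∑ k ∈ Finset.Icc 1 (p - 1), F k
      = ∑ k ∈ Finset.range (p - 1), F (1 + k) := by
    intro F
    have hp1 : p - 1 + 1 = p := Nat.succ_pred_eq_of_pos hp.pos
    rw [← Finset.Ico_add_one_right_eq_Icc, hp1, Finset.sum_Ico_eq_sum_range]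
  rw [hIcc f, hIcc (fun k => f (k + a))]
  have e1 : ∀ k, f (1 + k) = f (k + 1) := fun k => by rw [Nat.add_comm]
  have e2 : ∀ k, (1 + k) + a = k + (1 + a) := fun k => by ring
  simp only [e1, e2]
  rw [shift_sum_aux f n (p - 1) hper hdvd 1, shift_sum_aux f n (p - 1) hper hdvd (1 + a)]
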